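/- arXiv:1907.13533 — 7 statements merged into one kernel-verified Lean document; each statement's English description precedes it below -/
import Mathlib

section
/- Let N ≥ 2 and define the softmax functions F₀,…,F_{N−1} on ℝ^{N−1} by F_i(z) = exp(z_i)/(1 + Σ_{j=1}^{N−1} exp(z_j)) for 1 ≤ i ≤ N−1 and F₀(z) = 1/(1 + Σ_{j=1}^{N−1} exp(z_j)). Then for every c > 0, the supremum over z ∈ ℝ^{N−1} and y ∈ ℝ^{N−1} with |y| ≤ c of (1/2)·Σ_{i=0}^{N−1}|F_i(z+y) − F_i(z)| is strictly less than 1. -/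
open Finset

/-- The multinomial-logistic (softmax) probabilities on `{0,…,N-1}` (encoded as
`Option (Fin m)` with `N = m + 1`), with parameter `z ∈ ℝ^{N-1}`; `none` plays the
role of the reference modality `0`. -/
noncomputable def softmax {m : ℕ} (z : Fin m → ℝ) : Option (Fin m) → ℝ
  | none => 1 / (1 + ∑ j, Real.exp (z j))
  | some i => Real.exp (z i) / (1 + ∑ j, Real.exp (z j))

lemma softmax_nonneg {m : ℕ} (z : Fin m → ℝ) (i : Option (Fin m)) : 0 ≤ softmax z i := by
  have hD : (0:ℝ) < 1 + ∑ j, Real.exp (z j) := by positivity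
  cases i <;> simp [softmax] <;> positivity

lemma softmax_sum {m : ℕ} (z : Fin m → ℝ) : ∑ i : Option (Fin m), softmax z i = 1 := by
  have hD : (0:ℝ) < 1 + ∑ j, Real.exp (z j) := by positivity
  rw [Fintype.sum_option]
  simp only [softmax, ← Finset.sum_div, ← add_div]
  field_simp

/-- For every `c > 0`, the supremum over `z` and `‖y‖_∞ ≤ c` of the total variation
distance between the softmax distributions with parameters `z + y` and `z` is
strictly less than `1`. -/
theorem stmt3 (m : ℕ) (hm : 1 ≤ m) (c : ℝ) (hc : 0 < c) :
    ∃ ε < 1, ∀ z y : Fin m → ℝ, (∀ j, |y j| ≤ c) →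
      (1 / 2) * ∑ i : Option (Fin m), |softmax (z + y) i - softmax z i| ≤ ε := by
  set q : ℝ := Real.exp (-(2*c)) with hq
  have hq0 : 0 < q := Real.exp_pos _
  have hq1 : q ≤ 1 := by
    rw [hq, ← Real.exp_zero]
    exact Real.exp_le_exp.2 (by linarith)
  refine ⟨1 - q, by linarith, ?_⟩
  intro z y hy
  have hD : ∀ w : Fin m → ℝ, (0:ℝ) < 1 + ∑ j, Real.exp (w j) := fun w => by positivity
  have hDle : 1 + ∑ j, Real.exp ((z+y) j) ≤ Real.exp c * (1 + ∑ j, Real.exp (z j)) := by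
    have h1 : ∀ j ∈ Finset.univ, Real.exp ((z+y) j) ≤ Real.exp c * Real.exp (z j) := by
      intro j _
      rw [← Real.exp_add]
      apply Real.exp_le_exp.2
      have := (abs_le.1 (hy j)).2
      simp only [Pi.add_apply]
      linarith
    have h2 : ∑ j, Real.exp ((z+y) j) ≤ ∑ j, Real.exp c * Real.exp (z j) :=
      Finset.sum_le_sum h1
    have h3 : (1:ℝ) ≤ Real.exp c := by
      rw [← Real.exp_zero]; exact Real.exp_le_exp.2 (le_of_lt hc)
    have h4 : (0:ℝ) ≤ ∑ j, Real.exp (z j) :=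
      Finset.sum_nonneg fun j _ => (Real.exp_pos _).le
    rw [← Finset.mul_sum] at h2
    nlinarith
  have hkey : ∀ i, q * softmax z i ≤ softmax (z+y) i := by
    intro i
    have hec : (0:ℝ) < Real.exp c := Real.exp_pos _
    cases i with
    | none =>
      simp only [softmax]
      rw [mul_one_div, div_le_div_iff₀ (hD _) (hD _), one_mul]
      have : q * (1 + ∑ j, Real.exp ((z+y) j)) ≤ q * (Real.exp c * (1 + ∑ j, Real.exp (z j))) := by
        exact mul_le_mul_of_nonneg_left hDle hq0.le
      calc q * (1 + ∑ j, Real.exp ((z+y) j))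
          ≤ q * (Real.exp c * (1 + ∑ j, Real.exp (z j))) := this
        _ = (Real.exp (-(2*c)) * Real.exp c) * (1 + ∑ j, Real.exp (z j)) := by ring
        _ ≤ 1 * (1 + ∑ j, Real.exp (z j)) := by
            apply mul_le_mul_of_nonneg_right _ (hD z).le
            rw [← Real.exp_add, ← Real.exp_zero]
            exact Real.exp_le_exp.2 (by linarith)
        _ = 1 + ∑ j, Real.exp (z j) := by ring
    | some i =>
      simp only [softmax]
      rw [mul_div_assoc', div_le_div_iff₀ (hD _) (hD _)]
      have hnum : q * (1 + ∑ j, Real.exp ((z+y) j)) ≤ 1 + ∑ j, Real.exp (z j) := by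
        calc q * (1 + ∑ j, Real.exp ((z+y) j))
            ≤ q * (Real.exp c * (1 + ∑ j, Real.exp (z j))) :=
              mul_le_mul_of_nonneg_left hDle hq0.le
          _ = (Real.exp (-(2*c)) * Real.exp c) * (1 + ∑ j, Real.exp (z j)) := by ring
          _ ≤ 1 * (1 + ∑ j, Real.exp (z j)) := by
              apply mul_le_mul_of_nonneg_right _ (hD z).le
              rw [← Real.exp_add, ← Real.exp_zero]
              exact Real.exp_le_exp.2 (by linarith)
          _ = 1 + ∑ j, Real.exp (z j) := by ring
      have hexp : Real.exp (z i) ≤ Real.exp c * Real.exp ((z+y) i) := by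
        rw [← Real.exp_add]
        apply Real.exp_le_exp.2
        have := (abs_le.1 (hy i)).1
        simp only [Pi.add_apply]
        linarith
      calc q * Real.exp (z i) * (1 + ∑ j, Real.exp ((z+y) j))
          = Real.exp (z i) * (q * (1 + ∑ j, Real.exp ((z+y) j))) := by ring
        _ ≤ (Real.exp c * Real.exp ((z+y) i)) * (q * (1 + ∑ j, Real.exp ((z+y) j))) := by
            apply mul_le_mul_of_nonneg_right hexp
            positivity
        _ = Real.exp ((z+y) i) * ((Real.exp c * q) * (1 + ∑ j, Real.exp ((z+y) j))) := by ring
        _ ≤ Real.exp ((z+y) i) * (1 + ∑ j, Real.exp (z j)) := by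
            apply mul_le_mul_of_nonneg_left _ (Real.exp_pos _).le
            have : Real.exp c * q = Real.exp (-c) := by
              rw [hq, ← Real.exp_add]; ring_nf
            rw [this]
            calc Real.exp (-c) * (1 + ∑ j, Real.exp ((z+y) j))
                ≤ Real.exp (-c) * (Real.exp c * (1 + ∑ j, Real.exp (z j))) :=
                  mul_le_mul_of_nonneg_left hDle (Real.exp_pos _).le
              _ = (1 + ∑ j, Real.exp (z j)) := by
                  rw [← mul_assoc, ← Real.exp_add]; simp
  have hterm : ∀ i, |softmax (z+y) i - softmax z i| ≤
      softmax (z+y) i + softmax z i - 2 * q * softmax z i := by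
    intro i
    have h1 := hkey i
    have h2 := softmax_nonneg z i
    rw [abs_le]
    constructor <;> nlinarith
  calc (1 / 2) * ∑ i : Option (Fin m), |softmax (z + y) i - softmax z i|
      ≤ (1 / 2) * ∑ i : Option (Fin m),
          (softmax (z+y) i + softmax z i - 2 * q * softmax z i) := by
        apply mul_le_mul_of_nonneg_left _ (by norm_num)
        exact Finset.sum_le_sum fun i _ => hterm i
    _ = (1 / 2) * (2 - 2 * q) := by
        rw [Finset.sum_sub_distrib, Finset.sum_add_distrib, ← Finset.mul_sum,
          softmax_sum, softmax_sum]
        ring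
    _ = 1 - q := by ring
end

section
/- Let (b_m)_{m≥0} be a nonincreasing sequence in [0,1) with b₀ < 1, and let (S_n)_{n≥0} be the Markov chain on ℕ started at 0 with transition probabilities P(i, i+1) = 1 − b_i and P(i, 0) = b_i. Define b*_n = P(S_n = 0) for n ≥ 1 and b*₀ = b₀. If Σ_{m≥1} b_m < ∞ then Σ_{m≥1} b*_m < ∞. -/
/-- Distribution of the "house-of-cards" Markov chain on `ℕ` started at `0`, with
transitions `P(i, i+1) = 1 - b i` and `P(i, 0) = b i`:
`hoc b n j` is the probability that the chain is at state `j` at time `n`. -/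
noncomputable def hoc (b : ℕ → ℝ) : ℕ → ℕ → ℝ
  | 0 => fun j => if j = 0 then 1 else 0
  | n + 1 => fun j =>
      match j with
      | 0 => ∑' i, hoc b n i * b i
      | i + 1 => hoc b n i * (1 - b i)

lemma hoc_eq (b : ℕ → ℝ) : ∀ n j, hoc b n j =
    if j ≤ n then hoc b (n - j) 0 * ∏ k ∈ Finset.range j, (1 - b k) else 0 := by
  intro n
  induction n with
  | zero =>
    intro j
    cases j with
    | zero => simp [hoc]
    | succ i => simp [hoc]
  | succ n ih =>
    intro j
    cases j with
    | zero => simp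
    | succ i =>
      show hoc b n i * (1 - b i) = _
      rw [ih i]
      by_cases h : i ≤ n
      · rw [if_pos h, if_pos (by omega)]
        have : n + 1 - (i + 1) = n - i := by omega
        rw [this, Finset.prod_range_succ]
        ring
      · rw [if_neg h, if_neg (by omega), zero_mul]

lemma hoc_succ_zero (b : ℕ → ℝ) (n : ℕ) :
    hoc b (n + 1) 0 = ∑ i ∈ Finset.range (n + 1),
      hoc b (n - i) 0 * ((∏ k ∈ Finset.range i, (1 - b k)) * b i) := by
  show (∑' i, hoc b n i * b i) = _
  rw [tsum_eq_sum (s := Finset.range (n + 1)) ?_]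
  · refine Finset.sum_congr rfl fun i hi => ?_
    rw [hoc_eq b n i, if_pos (by simpa using Nat.lt_succ_iff.mp (Finset.mem_range.mp hi))]
    ring
  · intro i hi
    rw [hoc_eq b n i, if_neg (by simpa using Finset.mem_range.not.mp hi), zero_mul]

lemma hoc_zero_nonneg (b : ℕ → ℝ) (hb0 : ∀ m, 0 ≤ b m) (hb1 : ∀ m, b m ≤ 1) :
    ∀ n, 0 ≤ hoc b n 0 := by
  intro n
  induction n using Nat.strong_induction_on with
  | _ n ih =>
    cases n with
    | zero => simp [hoc]
    | succ n =>
      rw [hoc_succ_zero]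
      refine Finset.sum_nonneg fun i _ => ?_
      exact mul_nonneg (ih _ (by omega))
        (mul_nonneg (Finset.prod_nonneg fun k _ => by linarith [hb1 k]) (hb0 i))

lemma weier (b : ℕ → ℝ) (hb0 : ∀ m, 0 ≤ b m) (hb1 : ∀ m, b m ≤ 1) (M : ℕ) :
    ∀ N, 1 - (∑ k ∈ Finset.Ico M N, b k) ≤ ∏ k ∈ Finset.Ico M N, (1 - b k) := by
  intro N
  induction N with
  | zero => simp [Finset.Ico_eq_empty_iff]
  | succ N ih =>
    by_cases h : M ≤ N
    · rw [Finset.sum_Ico_succ_top h, Finset.prod_Ico_succ_top h]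
      have h1 : 0 ≤ 1 - b N := by linarith [hb1 N]
      have h2 : ∏ k ∈ Finset.Ico M N, (1 - b k) ≤ 1 :=
        Finset.prod_le_one (fun k _ => by linarith [hb1 k]) (fun k _ => by linarith [hb0 k])
      nlinarith [hb0 N]
    · rw [Finset.Ico_eq_empty (show ¬ M < N + 1 by omega)]; simp

lemma conv_le (G U : ℕ → ℝ) (hG : ∀ i, 0 ≤ G i) (hU : ∀ i, 0 ≤ U i) (N : ℕ) :
    ∑ n ∈ Finset.range N, ∑ i ∈ Finset.range (n + 1), G i * U (n - i)
      ≤ (∑ i ∈ Finset.range N, G i) * ∑ j ∈ Finset.range N, U j := by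
  have h1 : ∀ n ∈ Finset.range N, ∑ i ∈ Finset.range (n + 1), G i * U (n - i)
      = ∑ i ∈ Finset.range N, if i ≤ n then G i * U (n - i) else 0 := by
    intro n hn
    rw [Finset.sum_ite, Finset.sum_const_zero, add_zero]
    apply Finset.sum_congr _ (fun _ _ => rfl)
    ext i
    simp only [Finset.mem_filter, Finset.mem_range] at *
    omega
  rw [Finset.sum_congr rfl h1, Finset.sum_comm, Finset.sum_mul]
  refine Finset.sum_le_sum fun i hi => ?_
  have h2 : ∑ n ∈ Finset.range N, (if i ≤ n then G i * U (n - i) else 0)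
      = ∑ n ∈ Finset.Ico i N, G i * U (n - i) := by
    rw [Finset.sum_ite, Finset.sum_const_zero, add_zero]
    apply Finset.sum_congr _ (fun _ _ => rfl)
    ext n
    simp only [Finset.mem_filter, Finset.mem_range, Finset.mem_Ico]
    omega
  rw [h2, Finset.sum_Ico_eq_sum_range]
  have h3 : ∀ j ∈ Finset.range (N - i), G i * U (i + j - i) = G i * U j := by
    intro j _; congr 2; omega
  rw [Finset.sum_congr rfl h3, ← Finset.mul_sum]
  refine mul_le_mul_of_nonneg_left ?_ (hG i)
  exact Finset.sum_le_sum_of_subset_of_nonneg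
    (Finset.range_subset_range.mpr (by omega)) (fun j _ _ => hU j)

set_option maxHeartbeats 1000000 in
/-- If `(b m)` is nonincreasing in `[0,1)` with `b 0 < 1` and `Σ_{m≥1} b m < ∞`, then
`Σ_{m≥1} b*_m < ∞`, where `b*_n = P(S_n = 0)` for the house-of-cards chain. -/
theorem stmt5 (b : ℕ → ℝ) (hb0 : ∀ m, 0 ≤ b m) (hb1 : ∀ m, b m < 1) (hb01 : b 0 < 1)
    (hmono : Antitone b) (hsum : Summable fun m => b (m + 1)) :
    Summable (fun m => hoc b (m + 1) 0) := by
  set p : ℕ → ℝ := fun i => ∏ k ∈ Finset.range i, (1 - b k) with hp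
  set g : ℕ → ℝ := fun i => p i * b i with hg
  set u : ℕ → ℝ := fun n => hoc b n 0 with hu
  have hb1' : ∀ m, b m ≤ 1 := fun m => (hb1 m).le
  have hpnn : ∀ i, 0 < p i := fun i =>
    Finset.prod_pos fun k _ => by linarith [hb1 k]
  have hgnn : ∀ i, 0 ≤ g i := fun i => mul_nonneg (hpnn i).le (hb0 i)
  have hunn : ∀ n, 0 ≤ u n := hoc_zero_nonneg b hb0 hb1'
  -- telescoping sum of g
  have hps : ∀ i, p (i + 1) = p i * (1 - b i) := fun i => Finset.prod_range_succ _ i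
  have htel : ∀ N, ∑ i ∈ Finset.range N, g i = 1 - p N := by
    intro N
    have h0 : ∀ i, g i = p i - p (i + 1) := by
      intro i; rw [hps i]; ring
    have h1 : p 0 = 1 := Finset.prod_range_zero _
    calc ∑ i ∈ Finset.range N, g i = ∑ i ∈ Finset.range N, (p i - p (i + 1)) :=
          Finset.sum_congr rfl fun i _ => h0 i
      _ = p 0 - p N := Finset.sum_range_sub' p N
      _ = 1 - p N := by rw [h1]
  -- choose M with small tail
  have hb : Summable b := (summable_nat_add_iff 1).mp hsum
  have htail : Filter.Tendsto (fun i => ∑' k, b (k + i)) Filter.atTop (nhds 0) :=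
    tendsto_sum_nat_add b
  obtain ⟨M, hM⟩ := (htail.eventually_lt_const (by norm_num : (0:ℝ) < 1/2)).exists
  have hIco : ∀ N, ∑ k ∈ Finset.Ico M N, b k ≤ 1/2 := by
    intro N
    rw [Finset.sum_Ico_eq_sum_range]
    calc ∑ j ∈ Finset.range (N - M), b (M + j)
        = ∑ j ∈ Finset.range (N - M), b (j + M) :=
          Finset.sum_congr rfl fun j _ => by rw [Nat.add_comm]
      _ ≤ ∑' k, b (k + M) :=
          Summable.sum_le_tsum _ (fun k _ => hb0 _) ((summable_nat_add_iff M).mpr hb)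
      _ ≤ 1/2 := hM.le
  have hcpos : 0 < p M / 2 := div_pos (hpnn M) two_pos
  have hple : ∀ N, p M / 2 ≤ p N := by
    intro N
    rcases le_or_gt M N with h | h
    · have h1 : p N = p M * ∏ k ∈ Finset.Ico M N, (1 - b k) :=
        (Finset.prod_range_mul_prod_Ico _ h).symm
      have h2 : (1:ℝ)/2 ≤ ∏ k ∈ Finset.Ico M N, (1 - b k) := by
        have := weier b hb0 hb1' M N
        have := hIco N
        linarith
      rw [h1]
      nlinarith [hpnn M]
    · have h1 : p M = p N * ∏ k ∈ Finset.Ico N M, (1 - b k) :=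
        (Finset.prod_range_mul_prod_Ico _ h.le).symm
      have h2 : ∏ k ∈ Finset.Ico N M, (1 - b k) ≤ 1 :=
        Finset.prod_le_one (fun k _ => by linarith [hb1 k]) (fun k _ => by linarith [hb0 k])
      nlinarith [hpnn N, hpnn M]
  have hgle : ∀ N, ∑ i ∈ Finset.range N, g i ≤ 1 - p M / 2 := by
    intro N; rw [htel N]; linarith [hple N]
  have hc1 : p M / 2 ≤ 1 := by
    have h0 : p 0 = 1 := Finset.prod_range_zero _
    linarith [hple 0]
  -- recursion
  have hrec : ∀ n, u (n + 1) = ∑ i ∈ Finset.range (n + 1), g i * u (n - i) := by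
    intro n
    show hoc b (n + 1) 0 = _
    rw [hoc_succ_zero]
    exact Finset.sum_congr rfl fun i _ => mul_comm _ _
  have hu0 : u 0 = 1 := by show hoc b 0 0 = 1; simp [hoc]
  -- partial sums bound
  have hT : ∀ N, ∑ n ∈ Finset.range N, u n ≤ 1 / (p M / 2) := by
    intro N
    cases N with
    | zero =>
      rw [Finset.sum_range_zero]
      exact div_nonneg zero_le_one hcpos.le
    | succ N =>
      have h2 : ∑ n ∈ Finset.range N, u (n + 1)
          ≤ (1 - p M / 2) * ∑ n ∈ Finset.range (N + 1), u n := by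
        calc ∑ n ∈ Finset.range N, u (n + 1)
            = ∑ n ∈ Finset.range N, ∑ i ∈ Finset.range (n + 1), g i * u (n - i) :=
              Finset.sum_congr rfl fun n _ => hrec n
          _ ≤ (∑ i ∈ Finset.range N, g i) * ∑ j ∈ Finset.range N, u j :=
              conv_le g u hgnn hunn N
          _ ≤ (1 - p M / 2) * ∑ n ∈ Finset.range (N + 1), u n := by
              refine mul_le_mul (hgle N) ?_ (Finset.sum_nonneg fun j _ => hunn j)
                (by linarith)
              exact Finset.sum_le_sum_of_subset_of_nonneg
                (Finset.range_subset_range.mpr (by omega)) (fun j _ _ => hunn j)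
      have h1 : ∑ n ∈ Finset.range (N + 1), u n
          = (∑ n ∈ Finset.range N, u (n + 1)) + 1 := by
        rw [Finset.sum_range_succ' u N, hu0]
      rw [le_div_iff₀ hcpos]
      nlinarith
  have husum : Summable u := summable_of_sum_range_le hunn hT
  exact (summable_nat_add_iff 1).mpr husum
end

section
/- In the house-of-cards setting with nonincreasing (b_m) ⊂ [0,1), b₀ < 1: if b_m = O(ρ^m) for some ρ ∈ (0,1), then there exists ρ̄ ∈ (0,1) with b*_m = O(ρ̄^m). -/
lemma hoc_nonneg (b : ℕ → ℝ) (hb0 : ∀ m, 0 ≤ b m) (hb1 : ∀ m, b m ≤ 1) :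
    ∀ n j, 0 ≤ hoc b n j := by
  intro n
  induction n with
  | zero => intro j; simp only [hoc]; split <;> norm_num
  | succ n ih =>
    intro j
    match j with
    | 0 => exact tsum_nonneg fun i => mul_nonneg (ih i) (hb0 i)
    | j + 1 => exact mul_nonneg (ih j) (by linarith [hb1 j])

lemma hoc_eq_zero (b : ℕ → ℝ) : ∀ n j, n < j → hoc b n j = 0 := by
  intro n
  induction n with
  | zero => intro j hj; simp only [hoc]; rw [if_neg]; omega
  | succ n ih =>
    intro j hj
    match j with
    | 0 => omega
    | j + 1 =>
      show hoc b n j * (1 - b j) = 0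
      rw [ih j (by omega), zero_mul]

lemma hoc_zero_succ (b : ℕ → ℝ) (n : ℕ) :
    hoc b (n + 1) 0 = ∑ i ∈ Finset.range (n + 1), hoc b n i * b i := by
  show (∑' i, hoc b n i * b i) = _
  exact tsum_eq_sum fun i hi => by
    rw [hoc_eq_zero b n i (by simpa using hi), zero_mul]

lemma hoc_add (b : ℕ → ℝ) (n : ℕ) :
    ∀ i, hoc b (n + i) i = hoc b n 0 * ∏ k ∈ Finset.range i, (1 - b k) := by
  intro i
  induction i with
  | zero => simp
  | succ i ih =>
    show hoc b (n + i) i * (1 - b i) = _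
    rw [ih, Finset.prod_range_succ, mul_assoc]

lemma hoc_le (b : ℕ → ℝ) (m i : ℕ) (h : i ≤ m) :
    hoc b m i = hoc b (m - i) 0 * ∏ k ∈ Finset.range i, (1 - b k) := by
  conv_lhs => rw [show m = (m - i) + i by omega]
  exact hoc_add b (m - i) i


lemma exp_le_one_sub (x c : ℝ) (hx : 0 ≤ x) (hxc : x ≤ c) (hc : c < 1) :
    Real.exp (-(x / (1 - c))) ≤ 1 - x := by
  have hc0 : (0:ℝ) < 1 - c := by linarith
  have hy : 0 ≤ x / (1 - c) := by positivity
  have h1 : Real.exp (-(x / (1 - c))) = 1 / Real.exp (x / (1 - c)) := by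
    rw [Real.exp_neg, one_div]
  have h2 : 1 + x / (1 - c) ≤ Real.exp (x / (1 - c)) := by
    have := Real.add_one_le_exp (x / (1 - c)); linarith
  have h3 : 1 / Real.exp (x / (1 - c)) ≤ 1 / (1 + x / (1 - c)) :=
    one_div_le_one_div_of_le (by linarith) h2
  have key : (1 - x) * (1 + x / (1 - c)) * (1 - c) = (1 - c) + x * (c - x) := by
    field_simp; ring
  have h4 : 1 / (1 + x / (1 - c)) ≤ 1 - x := by
    rw [div_le_iff₀ (by linarith)]
    nlinarith [mul_nonneg hx (by linarith : 0 ≤ c - x)]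
  linarith [h1.le, h1.ge]


lemma geom_tail (κ : ℝ) (h0 : 0 ≤ κ) (h1 : κ < 1) (N M : ℕ) (hNM : N ≤ M) :
    ∑ i ∈ Finset.Ico N M, κ ^ i ≤ κ ^ N / (1 - κ) := by
  rw [geom_sum_Ico' h1.ne hNM]
  have h2 : (0:ℝ) < 1 - κ := by linarith
  gcongr
  linarith [pow_nonneg h0 M]

lemma renewal_bound (f : ℕ → ℝ) (hf0 : ∀ i, 0 ≤ f i) (P : ℝ) (hP : 0 < P) (hP1 : P ≤ 1)
    (hsum : ∀ M, ∑ i ∈ Finset.range M, f i ≤ 1 - P)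
    (C ρ : ℝ) (hC0 : 0 ≤ C) (hρ0 : 0 < ρ) (hρ1 : ρ < 1) (hfC : ∀ i, f i ≤ C * ρ ^ i) :
    ∃ ρ' ∈ Set.Ioo (0:ℝ) 1, ∀ M, ∑ i ∈ Finset.range M, f i / ρ' ^ (i + 1) ≤ 1 := by
  set ρ₁ : ℝ := (1 + ρ) / 2 with hρ₁def
  have hρ₁0 : 0 < ρ₁ := by positivity
  have hρρ₁ : ρ < ρ₁ := by rw [hρ₁def]; linarith
  have hρ₁1 : ρ₁ < 1 := by rw [hρ₁def]; linarith
  set κ : ℝ := ρ / ρ₁ with hκdef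
  have hκ0 : 0 < κ := by positivity
  have hκ1 : κ < 1 := (div_lt_one hρ₁0).mpr hρρ₁
  set D : ℝ := (C / ρ₁) / (1 - κ) with hDdef
  have hD0 : 0 ≤ D := by
    apply div_nonneg (div_nonneg hC0 hρ₁0.le) (by linarith)
  obtain ⟨N₀, hN₀⟩ := exists_pow_lt_of_lt_one (show 0 < P / 2 / (D + 1) by positivity) hκ1
  set N : ℕ := N₀ + 1 with hNdef
  have hN1 : 1 ≤ N := Nat.le_add_left 1 N₀
  have hκN : (D + 1) * κ ^ N ≤ P / 2 := by
    have h1 : κ ^ N ≤ κ ^ N₀ := pow_le_pow_of_le_one hκ0.le hκ1.le (by omega)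
    have h2 : (D + 1) * κ ^ N₀ < (D + 1) * (P / 2 / (D + 1)) := by
      apply mul_lt_mul_of_pos_left hN₀ (by linarith)
    rw [mul_div_cancel₀ _ (by linarith : D + 1 ≠ 0)] at h2
    nlinarith [pow_nonneg hκ0.le N₀]
  set r : ℝ := (1 - P) / (1 - P / 2) with hrdef
  have hden : (0:ℝ) < 1 - P / 2 := by linarith
  have hr0 : 0 ≤ r := div_nonneg (by linarith) hden.le
  have hr1 : r < 1 := (div_lt_one hden).mpr (by linarith)
  set ρ₂ : ℝ := 1 - (1 - r) / N with hρ₂def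
  have hNR : (1:ℝ) ≤ (N:ℝ) := by exact_mod_cast hN1
  have hρ₂0 : 0 ≤ ρ₂ := by
    rw [hρ₂def]
    have : (1 - r) / N ≤ 1 := by
      rw [div_le_one (by linarith)]; linarith
    linarith
  have hρ₂1 : ρ₂ < 1 := by
    rw [hρ₂def]
    have : 0 < (1 - r) / N := div_pos (by linarith) (by linarith)
    linarith
  set ρ' : ℝ := max ρ₁ ρ₂ with hρ'def
  have hρ'0 : 0 < ρ' := lt_of_lt_of_le hρ₁0 (le_max_left _ _)
  have hρ'1 : ρ' < 1 := max_lt hρ₁1 hρ₂1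
  have hρ'2 : ρ₁ ≤ ρ' := le_max_left _ _
  have hρ'N : r ≤ ρ' ^ N := by
    have h1 : r ≤ ρ₂ ^ N := by
      have := one_add_mul_le_pow (a := -((1 - r) / N)) (by
        have : (1 - r) / N ≤ 1 := by rw [div_le_one (by linarith)]; linarith
        linarith) N
      have e : (1 + -((1 - r) / N)) = ρ₂ := by rw [hρ₂def]; ring
      rw [e] at this
      have e2 : 1 + (N:ℝ) * -((1 - r) / N) = r := by
        field_simp
        ring
      linarith [this, e2.symm.le]
    exact h1.trans (pow_le_pow_left₀ hρ₂0 (le_max_right _ _) N)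
  refine ⟨ρ', ⟨hρ'0, hρ'1⟩, fun M => ?_⟩
  -- extend to M' = max M N
  set M' : ℕ := max M N with hM'def
  have hext : ∑ i ∈ Finset.range M, f i / ρ' ^ (i + 1)
      ≤ ∑ i ∈ Finset.range M', f i / ρ' ^ (i + 1) := by
    apply Finset.sum_le_sum_of_subset_of_nonneg
    · exact Finset.range_subset_range.mpr (le_max_left _ _)
    · intro i _ _; exact div_nonneg (hf0 i) (by positivity)
  have hNM' : N ≤ M' := le_max_right _ _
  have hsplit : ∑ i ∈ Finset.range M', f i / ρ' ^ (i + 1)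
      = (∑ i ∈ Finset.range N, f i / ρ' ^ (i + 1))
        + ∑ i ∈ Finset.Ico N M', f i / ρ' ^ (i + 1) := by
    rw [Finset.range_eq_Ico, Finset.range_eq_Ico]
    exact (Finset.sum_Ico_consecutive _ (Nat.zero_le N) hNM').symm
  have hhead : ∑ i ∈ Finset.range N, f i / ρ' ^ (i + 1) ≤ 1 - P / 2 := by
    have h1 : ∀ i ∈ Finset.range N, f i / ρ' ^ (i + 1) ≤ f i / ρ' ^ N := by
      intro i hi
      apply div_le_div_of_nonneg_left (hf0 i) (by positivity)
      exact pow_le_pow_of_le_one hρ'0.le hρ'1.le (by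
        simp only [Finset.mem_range] at hi; omega)
    calc ∑ i ∈ Finset.range N, f i / ρ' ^ (i + 1)
        ≤ ∑ i ∈ Finset.range N, f i / ρ' ^ N := Finset.sum_le_sum h1
      _ = (∑ i ∈ Finset.range N, f i) / ρ' ^ N := by rw [Finset.sum_div]
      _ ≤ 1 - P / 2 := by
          rw [div_le_iff₀ (by positivity)]
          have h2 : (1 - P / 2) * r ≤ (1 - P / 2) * ρ' ^ N :=
            mul_le_mul_of_nonneg_left hρ'N hden.le
          have h3 : (1 - P / 2) * r = 1 - P := by
            rw [hrdef, mul_div_cancel₀ _ (by linarith : (1:ℝ) - P / 2 ≠ 0)]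
          linarith [hsum N]
  have htail : ∑ i ∈ Finset.Ico N M', f i / ρ' ^ (i + 1) ≤ P / 2 := by
    have h1 : ∀ i ∈ Finset.Ico N M', f i / ρ' ^ (i + 1) ≤ (C / ρ₁) * κ ^ i := by
      intro i _
      have e : (C / ρ₁) * κ ^ i = C * ρ ^ i / ρ₁ ^ (i + 1) := by
        rw [hκdef, div_pow, div_mul_div_comm, ← pow_succ']
      rw [e]
      apply div_le_div₀ (by positivity) (hfC i) (by positivity)
      exact pow_le_pow_left₀ hρ₁0.le hρ'2 _
    calc ∑ i ∈ Finset.Ico N M', f i / ρ' ^ (i + 1)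
        ≤ ∑ i ∈ Finset.Ico N M', (C / ρ₁) * κ ^ i := Finset.sum_le_sum h1
      _ = (C / ρ₁) * ∑ i ∈ Finset.Ico N M', κ ^ i := by rw [Finset.mul_sum]
      _ ≤ (C / ρ₁) * (κ ^ N / (1 - κ)) := by
          apply mul_le_mul_of_nonneg_left (geom_tail κ hκ0.le hκ1 N M' hNM')
          positivity
      _ = D * κ ^ N := by rw [hDdef]; ring
      _ ≤ (D + 1) * κ ^ N := by nlinarith [pow_nonneg hκ0.le N]
      _ ≤ P / 2 := hκN
  linarith [hext, hsplit, hhead, htail]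


/-- Geometric decay: if `b m = O(ρ^m)` for some `ρ ∈ (0,1)`, then `b*_m = O(ρ̄^m)`
for some `ρ̄ ∈ (0,1)`, where `b*_m = P(S_m = 0)` for the house-of-cards chain. -/
theorem stmt7 (b : ℕ → ℝ) (hb0 : ∀ m, 0 ≤ b m) (hb1 : ∀ m, b m < 1) (hb01 : b 0 < 1)
    (hmono : Antitone b) (ρ : ℝ) (hρ : ρ ∈ Set.Ioo (0 : ℝ) 1) (C : ℝ)
    (hC : ∀ m, b m ≤ C * ρ ^ m) :
    ∃ ρ' ∈ Set.Ioo (0 : ℝ) 1, ∃ C' : ℝ, ∀ m, hoc b m 0 ≤ C' * ρ' ^ m := by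
  obtain ⟨hρ0, hρ1⟩ := hρ
  have hC0 : 0 ≤ C := by have := hC 0; simp at this; linarith [hb0 0]
  set B : ℝ := C / (1 - ρ) with hBdef
  have hB0 : 0 ≤ B := div_nonneg hC0 (by linarith)
  have hBsum : ∀ M, ∑ k ∈ Finset.range M, b k ≤ B := by
    intro M
    calc ∑ k ∈ Finset.range M, b k ≤ ∑ k ∈ Finset.range M, C * ρ ^ k :=
          Finset.sum_le_sum fun k _ => hC k
      _ = C * ∑ k ∈ Finset.range M, ρ ^ k := by rw [Finset.mul_sum]
      _ ≤ C * (ρ ^ 0 / (1 - ρ)) := by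
          apply mul_le_mul_of_nonneg_left ?_ hC0
          rw [Finset.range_eq_Ico]
          exact geom_tail ρ hρ0.le hρ1 0 M (Nat.zero_le M)
      _ = B := by rw [hBdef, pow_zero]; ring
  set P : ℝ := Real.exp (-(B / (1 - b 0))) with hPdef
  have hP0 : 0 < P := Real.exp_pos _
  have hP1 : P ≤ 1 := by
    rw [hPdef, Real.exp_le_one_iff]
    have : 0 ≤ B / (1 - b 0) := div_nonneg hB0 (by linarith)
    linarith
  set w : ℕ → ℝ := fun i => ∏ k ∈ Finset.range i, (1 - b k) with hwdef
  have hw0 : ∀ i, 0 ≤ w i := fun i =>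
    Finset.prod_nonneg fun k _ => by linarith [hb1 k]
  have hw1 : ∀ i, w i ≤ 1 := fun i =>
    Finset.prod_le_one (fun k _ => by linarith [hb1 k]) (fun k _ => by linarith [hb0 k])
  have hwP : ∀ i, P ≤ w i := by
    intro i
    have step1 : P ≤ Real.exp (-((∑ k ∈ Finset.range i, b k) / (1 - b 0))) := by
      rw [hPdef]
      apply Real.exp_le_exp.mpr
      have h : (∑ k ∈ Finset.range i, b k) / (1 - b 0) ≤ B / (1 - b 0) := by
        gcongr
        · exact hBsum i
      linarith
    have step2 : Real.exp (-((∑ k ∈ Finset.range i, b k) / (1 - b 0)))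
        = ∏ k ∈ Finset.range i, Real.exp (-(b k / (1 - b 0))) := by
      rw [← Real.exp_sum]
      congr 1
      rw [Finset.sum_neg_distrib, Finset.sum_div]
    have step3 : ∏ k ∈ Finset.range i, Real.exp (-(b k / (1 - b 0))) ≤ w i :=
      Finset.prod_le_prod (fun k _ => (Real.exp_pos _).le)
        (fun k _ => exp_le_one_sub (b k) (b 0) (hb0 k) (hmono (Nat.zero_le k)) hb01)
    calc P ≤ _ := step1
      _ = _ := step2
      _ ≤ w i := step3
  set f : ℕ → ℝ := fun i => w i * b i with hfdef
  have hf0 : ∀ i, 0 ≤ f i := fun i => mul_nonneg (hw0 i) (hb0 i)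
  have hfC : ∀ i, f i ≤ C * ρ ^ i := by
    intro i
    have e : f i = w i * b i := rfl
    rw [e]
    nlinarith [hw1 i, hb0 i, hw0 i, hC i]
  have hsum : ∀ M, ∑ i ∈ Finset.range M, f i ≤ 1 - P := by
    intro M
    have e : ∀ i, f i = w i - w (i + 1) := by
      intro i
      have : w (i + 1) = w i * (1 - b i) := Finset.prod_range_succ _ i
      rw [hfdef]; simp only; rw [this]; ring
    have : ∑ i ∈ Finset.range M, f i = w 0 - w M := by
      rw [Finset.sum_congr rfl fun i _ => e i]
      exact Finset.sum_range_sub' w M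
    rw [this]
    have : w 0 = 1 := by rw [hwdef]; simp
    rw [this]
    linarith [hwP M]
  obtain ⟨ρ', hρ'mem, hbound⟩ :=
    renewal_bound f hf0 P hP0 hP1 hsum C ρ hC0 hρ0 hρ1 hfC
  obtain ⟨hρ'0, hρ'1⟩ := hρ'mem
  have main : ∀ m, hoc b m 0 ≤ ρ' ^ m := by
    intro m
    induction m using Nat.strong_induction_on with
    | _ m ih =>
      match m with
      | 0 => simp [hoc]
      | m + 1 =>
        rw [hoc_zero_succ]
        calc ∑ i ∈ Finset.range (m + 1), hoc b m i * b i
            = ∑ i ∈ Finset.range (m + 1), hoc b (m - i) 0 * (w i * b i) := by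
              apply Finset.sum_congr rfl
              intro i hi
              simp only [Finset.mem_range] at hi
              have hi' : i ≤ m := by omega
              rw [hoc_le b m i hi']
              simp only [hwdef]
              ring
          _ ≤ ∑ i ∈ Finset.range (m + 1), ρ' ^ (m - i) * (w i * b i) := by
              apply Finset.sum_le_sum
              intro i hi
              exact mul_le_mul_of_nonneg_right (ih (m - i) (by omega))
                (mul_nonneg (hw0 i) (hb0 i))
          _ = ∑ i ∈ Finset.range (m + 1), (f i / ρ' ^ (i + 1)) * ρ' ^ (m + 1) := by
              apply Finset.sum_congr rfl
              intro i hi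
              simp only [Finset.mem_range] at hi
              have e : ρ' ^ (m + 1) = ρ' ^ (i + 1) * ρ' ^ (m - i) := by
                rw [← pow_add]; congr 1; omega
              rw [e, hfdef]
              have hne : ρ' ^ (i + 1) ≠ 0 := by positivity
              field_simp
          _ = (∑ i ∈ Finset.range (m + 1), f i / ρ' ^ (i + 1)) * ρ' ^ (m + 1) :=
              (Finset.sum_mul _ _ _).symm
          _ ≤ 1 * ρ' ^ (m + 1) :=
              mul_le_mul_of_nonneg_right (hbound (m + 1)) (by positivity)
          _ = ρ' ^ (m + 1) := one_mul _
  exact ⟨ρ', ⟨hρ'0, hρ'1⟩, 1, fun m => by simpa using main m⟩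
end

section
/- Let (G_{y,x})_{(y,x)∈E×ℝ^d} be a family of maps ℝ^k → ℝ^k such that (i) |G_{y,x}(z) − G_{y',x'}(z')| ≤ L(1_{y≠y'} + |x−x'| + |z−z'|) for some L ≥ 1, and (ii) there exist r ∈ ℕ* and κ ∈ (0,1) such that every r-fold composition G_{y₁,x₁}∘⋯∘G_{y_r,x_r} is κ-Lipschitz. Fix sequences y ∈ E^ℤ and x with Σ_{i≥0} κ^{i/r}|x_{t−i}| < ∞. Then for each t the sequence λ_{n,t} := G_{y_{t−1},x_t}∘⋯∘G_{y_{t−n−1},x_{t−n}}(0) converges in ℝ^k as n → ∞. -/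
open Classical

/-- Backward iterates of the observation-driven recursion:
`backIter G y x t n z = G (y (t-1)) (x t) (G (y (t-2)) (x (t-1)) (… (G (y (t-n)) (x (t-n+1)) z)))`,
the composition of the `n` maps `G_{y_{t-1},x_t} ∘ ⋯ ∘ G_{y_{t-n},x_{t-n+1}}` applied to `z`. -/
def backIter {E V W : Type*} (G : E → V → W → W) (y : ℤ → E) (x : ℤ → V) :
    ℤ → ℕ → W → W
  | _, 0, z => z
  | t, n + 1, z => G (y (t - 1)) (x t) (backIter G y x (t - 1) n z)

lemma backIter_add {E V W : Type*} (G : E → V → W → W) (y : ℤ → E) (x : ℤ → V) :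
    ∀ (m n : ℕ) (t : ℤ) (z : W),
      backIter G y x t (m + n) z = backIter G y x t m (backIter G y x (t - m) n z) := by
  intro m
  induction m with
  | zero => intro n t z; simp [backIter]
  | succ m ih =>
    intro n t z
    rw [Nat.succ_add]
    show G (y (t-1)) (x t) (backIter G y x (t-1) (m+n) z)
      = G (y (t-1)) (x t) (backIter G y x (t-1) m (backIter G y x (t - (m+1 : ℕ)) n z))
    rw [ih]
    congr 2
    push_cast
    ring


/-- Under the joint Lipschitz bound on `G` and contraction of `r`-fold compositions,
for a covariate sequence with summable weighted norms, the backward iterates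
`λ_{n,t} = G_{y_{t-1},x_t} ∘ ⋯ ∘ G_{y_{t-n-1},x_{t-n}} (0)` converge as `n → ∞`. -/
theorem stmt11 {E V W : Type*} [NormedAddCommGroup V] [NormedAddCommGroup W]
    [CompleteSpace W]
    (G : E → V → W → W) (L : ℝ) (hL : 1 ≤ L)
    (hLip : ∀ (y y' : E) (x x' : V) (z z' : W),
      ‖G y x z - G y' x' z'‖ ≤
        L * ((if y = y' then (0 : ℝ) else 1) + ‖x - x'‖ + ‖z - z'‖))
    (r : ℕ) (hr : 0 < r) (κ : ℝ) (hκ : κ ∈ Set.Ioo (0 : ℝ) 1)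
    (hcontract : ∀ (y : ℤ → E) (x : ℤ → V) (t : ℤ) (z z' : W),
      ‖backIter G y x t r z - backIter G y x t r z'‖ ≤ κ * ‖z - z'‖)
    (y : ℤ → E) (x : ℤ → V)
    (hx : ∀ t : ℤ, Summable fun i : ℕ => κ ^ ((i : ℝ) / (r : ℝ)) * ‖x (t - i)‖) :
    ∀ t : ℤ, ∃ l : W,
      Filter.Tendsto (fun n : ℕ => backIter G y x t (n + 1) 0) Filter.atTop (nhds l) := by
  obtain ⟨hκ0, hκ1⟩ := hκ
  have hL0 : (0 : ℝ) ≤ L := le_trans zero_le_one hL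
  have step : ∀ (e : E) (v : V) (z z' : W), ‖G e v z - G e v z'‖ ≤ L * ‖z - z'‖ := by
    intro e v z z'
    have := hLip e e v v z z'
    simpa using this
  have lemA : ∀ (n : ℕ) (t : ℤ) (z z' : W),
      ‖backIter G y x t n z - backIter G y x t n z'‖ ≤ L ^ n * ‖z - z'‖ := by
    intro n
    induction n with
    | zero => intro t z z'; simp [backIter]
    | succ n ih =>
      intro t z z'
      calc ‖backIter G y x t (n+1) z - backIter G y x t (n+1) z'‖
          = ‖G (y (t-1)) (x t) (backIter G y x (t-1) n z)
              - G (y (t-1)) (x t) (backIter G y x (t-1) n z')‖ := rfl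
        _ ≤ L * ‖backIter G y x (t-1) n z - backIter G y x (t-1) n z'‖ := step _ _ _ _
        _ ≤ L * (L ^ n * ‖z - z'‖) := mul_le_mul_of_nonneg_left (ih _ _ _) hL0
        _ = L ^ (n+1) * ‖z - z'‖ := by ring
  have lemB : ∀ (q : ℕ) (t : ℤ) (z z' : W),
      ‖backIter G y x t (q * r) z - backIter G y x t (q * r) z'‖ ≤ κ ^ q * ‖z - z'‖ := by
    intro q
    induction q with
    | zero => intro t z z'; simp [backIter]
    | succ q ih =>
      intro t z z'
      have heq : (q + 1) * r = r + q * r := by ring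
      rw [heq, backIter_add, backIter_add]
      calc ‖backIter G y x t r (backIter G y x (t - r) (q*r) z)
            - backIter G y x t r (backIter G y x (t - r) (q*r) z')‖
          ≤ κ * ‖backIter G y x (t - r) (q*r) z - backIter G y x (t - r) (q*r) z'‖ :=
            hcontract y x t _ _
        _ ≤ κ * (κ ^ q * ‖z - z'‖) := mul_le_mul_of_nonneg_left (ih _ _ _) hκ0.le
        _ = κ ^ (q+1) * ‖z - z'‖ := by ring
  have lemC : ∀ (n : ℕ) (t : ℤ) (z z' : W),
      ‖backIter G y x t n z - backIter G y x t n z'‖ ≤ κ ^ (n / r) * L ^ r * ‖z - z'‖ := by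
    intro n t z z'
    have hdecomp : n / r * r + n % r = n := by
      rw [mul_comm]; exact Nat.div_add_mod n r
    conv_lhs => rw [← hdecomp]
    rw [backIter_add, backIter_add]
    calc ‖backIter G y x t (n/r*r) (backIter G y x (t - ↑(n/r*r)) (n%r) z)
          - backIter G y x t (n/r*r) (backIter G y x (t - ↑(n/r*r)) (n%r) z')‖
        ≤ κ ^ (n/r) * ‖backIter G y x (t - ↑(n/r*r)) (n%r) z
            - backIter G y x (t - ↑(n/r*r)) (n%r) z'‖ := lemB _ _ _ _
      _ ≤ κ ^ (n/r) * (L ^ (n%r) * ‖z - z'‖) :=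
          mul_le_mul_of_nonneg_left (lemA _ _ _ _) (pow_nonneg hκ0.le _)
      _ ≤ κ ^ (n/r) * (L ^ r * ‖z - z'‖) := by
          have h1 : L ^ (n%r) ≤ L ^ r := pow_le_pow_right₀ hL (le_of_lt (Nat.mod_lt n hr))
          exact mul_le_mul_of_nonneg_left
            (mul_le_mul_of_nonneg_right h1 (norm_nonneg _)) (pow_nonneg hκ0.le _)
      _ = κ ^ (n/r) * L ^ r * ‖z - z'‖ := by ring
  set M : ℝ := L + ‖G (y 0) 0 (0:W)‖ with hM
  have hM0 : 0 ≤ M := by positivity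
  have hGM : ∀ (e : E) (v : V), ‖G e v (0:W)‖ ≤ M + L * ‖v‖ := by
    intro e v
    have h1 : ‖G e v (0:W) - G (y 0) 0 (0:W)‖ ≤ L * (1 + ‖v‖) := by
      have h0 := hLip e (y 0) v 0 (0:W) (0:W)
      have h2 : ((if e = y 0 then (0:ℝ) else 1) + ‖v - 0‖ + ‖(0:W) - 0‖) ≤ 1 + ‖v‖ := by
        split <;> simp
      exact le_trans h0 (mul_le_mul_of_nonneg_left h2 hL0)
    have h3 : ‖G e v (0:W)‖ ≤ ‖G e v (0:W) - G (y 0) 0 (0:W)‖ + ‖G (y 0) 0 (0:W)‖ := by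
      have := norm_add_le (G e v (0:W) - G (y 0) 0 (0:W)) (G (y 0) 0 (0:W))
      simpa using this
    have : L * (1 + ‖v‖) + ‖G (y 0) 0 (0:W)‖ = M + L * ‖v‖ := by rw [hM]; ring
    linarith
  intro t
  set f : ℕ → W := fun n => backIter G y x t (n + 1) 0 with hf
  -- weight function
  set g : ℕ → ℝ := fun i => κ ^ ((i : ℝ) / (r : ℝ)) with hg
  have hr0 : (0:ℝ) < (r:ℝ) := by exact_mod_cast hr
  have hg0 : ∀ i, 0 ≤ g i := fun i => Real.rpow_nonneg hκ0.le _
  -- pointwise exponent comparison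
  have hgeom : ∀ m : ℕ, (κ : ℝ) ^ (m / r) ≤ κ⁻¹ * g m := by
    intro m
    have hq : ((m:ℝ)/(r:ℝ)) - 1 ≤ ((m / r : ℕ) : ℝ) := by
      have h1 : m < m / r * r + r := by
        have h0 : m / r * r + m % r = m := by rw [mul_comm]; exact Nat.div_add_mod m r
        have h2 := Nat.mod_lt m hr
        omega
      have h2 : (m:ℝ) < ((m/r : ℕ):ℝ) * (r:ℝ) + (r:ℝ) := by exact_mod_cast h1
      rw [sub_le_iff_le_add, div_le_iff₀ hr0]
      nlinarith
    calc (κ:ℝ) ^ (m / r) = κ ^ (((m / r : ℕ) : ℝ)) := (Real.rpow_natCast κ _).symm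
      _ ≤ κ ^ (((m:ℝ)/(r:ℝ)) - 1) :=
          Real.rpow_le_rpow_of_exponent_ge hκ0 hκ1.le hq
      _ = κ⁻¹ * g m := by
          rw [Real.rpow_sub hκ0, Real.rpow_one, hg]
          ring
  -- the dominating sequence
  set D : ℕ → ℝ := fun n => (κ⁻¹ * L ^ r) * (g (n+1) * M + L * (g (n+1) * ‖x (t - ((n:ℤ)+1))‖))
    with hD
  have hdiff : ∀ n : ℕ, dist (f n) (f (n+1)) ≤ D n := by
    intro n
    have h1 : f (n+1) = backIter G y x t (n+1)
        (G (y (t - (n+1:ℕ) - 1)) (x (t - (n+1:ℕ))) 0) := by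
      show backIter G y x t ((n+1) + 1) 0 = _
      rw [backIter_add]
      rfl
    have h2 : dist (f n) (f (n+1)) ≤ κ ^ ((n+1)/r) * L ^ r *
        ‖(0:W) - G (y (t - (n+1:ℕ) - 1)) (x (t - (n+1:ℕ))) 0‖ := by
      rw [dist_eq_norm, h1]; exact lemC _ _ _ _
    have h3 : ‖(0:W) - G (y (t - (n+1:ℕ) - 1)) (x (t - (n+1:ℕ))) 0‖
        ≤ M + L * ‖x (t - (n+1:ℕ))‖ := by
      rw [zero_sub, norm_neg]; exact hGM _ _
    have h4 : dist (f n) (f (n+1)) ≤ κ ^ ((n+1)/r) * L ^ r * (M + L * ‖x (t - (n+1:ℕ))‖) :=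
      le_trans h2 (mul_le_mul_of_nonneg_left h3
        (mul_nonneg (pow_nonneg hκ0.le _) (pow_nonneg hL0 _)))
    have h5 : κ ^ ((n+1)/r) * L ^ r * (M + L * ‖x (t - (n+1:ℕ))‖)
        ≤ (κ⁻¹ * g (n+1)) * L ^ r * (M + L * ‖x (t - (n+1:ℕ))‖) := by
      have hMx : 0 ≤ M + L * ‖x (t - (n+1:ℕ))‖ := by positivity
      have hge := hgeom (n+1)
      have hLr : (0:ℝ) ≤ L ^ r := pow_nonneg hL0 _
      exact mul_le_mul_of_nonneg_right (mul_le_mul_of_nonneg_right hge hLr) hMx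
    have h6 : (κ⁻¹ * g (n+1)) * L ^ r * (M + L * ‖x (t - (n+1:ℕ))‖) = D n := by
      rw [hD]
      have : (t - (n+1:ℕ) : ℤ) = t - ((n:ℤ)+1) := by push_cast; ring
      rw [this]
      ring
    rw [← h6]
    exact le_trans h4 h5
  -- summability of D
  have hsumg : Summable g := by
    have hc0 : (0:ℝ) ≤ κ ^ ((1:ℝ)/(r:ℝ)) := Real.rpow_nonneg hκ0.le _
    have hc1 : κ ^ ((1:ℝ)/(r:ℝ)) < 1 :=
      Real.rpow_lt_one hκ0.le hκ1 (by positivity)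
    have := summable_geometric_of_lt_one hc0 hc1
    refine this.congr fun i => ?_
    rw [← Real.rpow_natCast (κ ^ ((1:ℝ)/(r:ℝ))) i, ← Real.rpow_mul hκ0.le]
    congr 1
    field_simp
  have hsumx : Summable fun n : ℕ => g (n+1) * ‖x (t - ((n:ℤ)+1))‖ := by
    have := (summable_nat_add_iff 1).2 (hx t)
    refine this.congr fun n => ?_
    congr 2
    all_goals (push_cast; ring)
  have hsumgM : Summable fun n : ℕ => g (n+1) * M :=
    ((summable_nat_add_iff 1).2 hsumg).mul_right M
  have hsumD : Summable D := ((hsumgM.add (hsumx.mul_left L)).mul_left _)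
  have hC : CauchySeq f := cauchySeq_of_dist_le_of_summable D hdiff hsumD
  exact cauchySeq_tendsto_of_complete hC
end

section
/- Under the same hypotheses on the family (G_{y,x}) (L-Lipschitz joint bound, and r-fold compositions κ-contractions with κ ∈ (0,1)), suppose a sequence (λ̄_t)_{t∈ℤ} in ℝ^k satisfies λ̄_t = G_{y_{t−1},x_t}(λ̄_{t−1}) for all t and lim inf_{t→−∞} |λ̄_t| < ∞. Then λ̄_t equals the limit λ_t^{(y,x)} = lim_n G_{y_{t−1},x_t}∘⋯∘G_{y_{t−n−1},x_{t−n}}(0) for every t ∈ ℤ. In particular, such a bounded-in-the-past solution is unique. -/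
open Classical

lemma backIter_lip {E V W : Type*} [NormedAddCommGroup V] [NormedAddCommGroup W]
    (G : E → V → W → W) (L : ℝ) (hL : 1 ≤ L)
    (hLip : ∀ (y y' : E) (x x' : V) (z z' : W),
      ‖G y x z - G y' x' z'‖ ≤
        L * ((if y = y' then (0 : ℝ) else 1) + ‖x - x'‖ + ‖z - z'‖))
    (y : ℤ → E) (x : ℤ → V) :
    ∀ (n : ℕ) (t : ℤ) (z z' : W),
      ‖backIter G y x t n z - backIter G y x t n z'‖ ≤ L ^ n * ‖z - z'‖ := by
  intro n
  induction n with
  | zero => intro t z z'; simp [backIter]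
  | succ n ih =>
      intro t z z'
      have h := hLip (y (t-1)) (y (t-1)) (x t) (x t)
        (backIter G y x (t-1) n z) (backIter G y x (t-1) n z')
      simp only [if_pos rfl, sub_self, norm_zero] at h
      calc ‖backIter G y x t (n+1) z - backIter G y x t (n+1) z'‖
          ≤ L * (0 + 0 + ‖backIter G y x (t-1) n z - backIter G y x (t-1) n z'‖) := h
        _ = L * ‖backIter G y x (t-1) n z - backIter G y x (t-1) n z'‖ := by ring_nf
        _ ≤ L * (L ^ n * ‖z - z'‖) := by
            apply mul_le_mul_of_nonneg_left (ih _ _ _) (by linarith)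
        _ = L ^ (n+1) * ‖z - z'‖ := by ring

/-- Uniqueness of the bounded-in-the-past solution: any sequence `λ̄` satisfying the
recursion `λ̄ t = G (y (t-1)) (x t) (λ̄ (t-1))` with `lim inf_{t→-∞} ‖λ̄ t‖ < ∞`
coincides with the limit of the backward iterates started from `0`. -/
theorem stmt12 {E V W : Type*} [NormedAddCommGroup V] [NormedAddCommGroup W]
    [CompleteSpace W]
    (G : E → V → W → W) (L : ℝ) (hL : 1 ≤ L)
    (hLip : ∀ (y y' : E) (x x' : V) (z z' : W),
      ‖G y x z - G y' x' z'‖ ≤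
        L * ((if y = y' then (0 : ℝ) else 1) + ‖x - x'‖ + ‖z - z'‖))
    (r : ℕ) (hr : 0 < r) (κ : ℝ) (hκ : κ ∈ Set.Ioo (0 : ℝ) 1)
    (hcontract : ∀ (y : ℤ → E) (x : ℤ → V) (t : ℤ) (z z' : W),
      ‖backIter G y x t r z - backIter G y x t r z'‖ ≤ κ * ‖z - z'‖)
    (y : ℤ → E) (x : ℤ → V)
    (hx : ∀ t : ℤ, Summable fun i : ℕ => κ ^ ((i : ℝ) / (r : ℝ)) * ‖x (t - i)‖)
    (lam : ℤ → W)
    (hlam : ∀ t : ℤ,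
      Filter.Tendsto (fun n : ℕ => backIter G y x t (n + 1) 0) Filter.atTop (nhds (lam t)))
    (lamBar : ℤ → W)
    (hrec : ∀ t : ℤ, lamBar t = G (y (t - 1)) (x t) (lamBar (t - 1)))
    (hbdd : ∃ C : ℝ, ∀ t : ℤ, ∃ s ≤ t, ‖lamBar s‖ ≤ C) :
    ∀ t : ℤ, lamBar t = lam t := by
  obtain ⟨hκ0, hκ1⟩ := hκ
  obtain ⟨C, hC⟩ := hbdd
  have hC0 : 0 ≤ C := by
    obtain ⟨s, _, hs⟩ := hC 0
    exact le_trans (norm_nonneg _) hs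
  -- lamBar t = backIter t n (lamBar (t - n))
  have hrep : ∀ (n : ℕ) (t : ℤ), lamBar t = backIter G y x t n (lamBar (t - n)) := by
    intro n
    induction n with
    | zero => intro t; simp [backIter]
    | succ n ih =>
        intro t
        rw [hrec t, ih (t-1)]
        show _ = G (y (t-1)) (x t) (backIter G y x (t-1) n (lamBar (t - (n+1:ℕ))))
        congr 2
        push_cast
        ring
  -- contraction for multiples of r
  have hmul : ∀ (m : ℕ) (t : ℤ) (z z' : W),
      ‖backIter G y x t (m * r) z - backIter G y x t (m * r) z'‖ ≤ κ ^ m * ‖z - z'‖ := by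
    intro m
    induction m with
    | zero => intro t z z'; simp [backIter]
    | succ m ih =>
        intro t z z'
        have he : (m + 1) * r = r + m * r := by ring
        rw [he, backIter_add, backIter_add]
        calc ‖_ - _‖ ≤ κ * ‖backIter G y x (t - r) (m*r) z - backIter G y x (t - r) (m*r) z'‖ :=
              hcontract y x t _ _
          _ ≤ κ * (κ ^ m * ‖z - z'‖) := mul_le_mul_of_nonneg_left (ih _ _ _) (le_of_lt hκ0)
          _ = κ ^ (m+1) * ‖z - z'‖ := by ring
  -- general contraction bound
  have hgen : ∀ (n : ℕ) (t : ℤ) (z z' : W),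
      ‖backIter G y x t n z - backIter G y x t n z'‖ ≤ κ ^ (n / r) * L ^ r * ‖z - z'‖ := by
    intro n t z z'
    have hd : n = (n / r) * r + n % r := by
      rw [Nat.mul_comm]; exact (Nat.div_add_mod n r).symm
    calc ‖backIter G y x t n z - backIter G y x t n z'‖
        = ‖backIter G y x t ((n/r)*r) (backIter G y x (t - ((n/r)*r : ℕ)) (n % r) z)
            - backIter G y x t ((n/r)*r) (backIter G y x (t - ((n/r)*r : ℕ)) (n % r) z')‖ := by
          rw [← backIter_add, ← backIter_add, ← hd]
      _ ≤ κ ^ (n/r) * ‖backIter G y x (t - ((n/r)*r : ℕ)) (n % r) z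
            - backIter G y x (t - ((n/r)*r : ℕ)) (n % r) z'‖ := hmul _ _ _ _
      _ ≤ κ ^ (n/r) * (L ^ (n % r) * ‖z - z'‖) := by
          apply mul_le_mul_of_nonneg_left (backIter_lip G L hL hLip y x _ _ _ _)
          positivity
      _ ≤ κ ^ (n/r) * (L ^ r * ‖z - z'‖) := by
          apply mul_le_mul_of_nonneg_left _ (by positivity)
          apply mul_le_mul_of_nonneg_right _ (norm_nonneg _)
          exact pow_le_pow_right₀ hL (le_of_lt (Nat.mod_lt n hr))
      _ = κ ^ (n/r) * L ^ r * ‖z - z'‖ := by ring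
  intro t
  by_contra hne
  set ε := ‖lamBar t - lam t‖ with hε
  have hεpos : 0 < ε := norm_pos_iff.mpr (sub_ne_zero.mpr hne)
  -- choose N from convergence
  obtain ⟨N, hN⟩ := (Metric.tendsto_atTop.mp (hlam t)) (ε/2) (by linarith)
  -- choose Q with κ^Q small
  have hLC : (0:ℝ) ≤ L ^ r * C := by positivity
  obtain ⟨Q, hQ⟩ := exists_pow_lt_of_lt_one (show (0:ℝ) < ε/2/(L^r*C+1) by positivity) hκ1
  have hQ' : κ ^ Q * (L ^ r * C) < ε / 2 := by
    have h1 : κ ^ Q * (L ^ r * C) ≤ κ ^ Q * (L ^ r * C + 1) := by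
      apply mul_le_mul_of_nonneg_left (by linarith) (by positivity)
    have h2 : κ ^ Q * (L ^ r * C + 1) < ε/2/(L^r*C+1) * (L^r*C+1) := by
      apply mul_lt_mul_of_pos_right hQ (by linarith)
    rw [div_mul_cancel₀] at h2
    · linarith
    · linarith
  obtain ⟨j, hj1, hj2⟩ : ∃ j : ℕ, N + 1 ≤ j ∧ (Q + 1) * r ≤ j :=
    ⟨max (N + 1) ((Q + 1) * r), le_max_left _ _, le_max_right _ _⟩
  obtain ⟨s, hst, hsC⟩ := hC (t - j)
  obtain ⟨m, hms⟩ : ∃ m : ℕ, (m : ℤ) = t - s :=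
    ⟨(t - s).toNat, Int.toNat_of_nonneg (by omega)⟩
  have hmj : j ≤ m := by
    revert hst hms
    omega
  have hrep' : lamBar t = backIter G y x t m (lamBar s) := by
    have : t - (m:ℤ) = s := by omega
    rw [hrep m t, this]
  have bound1 : ‖lamBar t - backIter G y x t m 0‖ < ε/2 := by
    rw [hrep']
    calc ‖backIter G y x t m (lamBar s) - backIter G y x t m 0‖
        ≤ κ ^ (m/r) * L ^ r * ‖lamBar s - 0‖ := hgen m t _ _
      _ = κ ^ (m/r) * (L ^ r * ‖lamBar s‖) := by rw [sub_zero]; ring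
      _ ≤ κ ^ (m/r) * (L ^ r * C) := by
          apply mul_le_mul_of_nonneg_left _ (by positivity)
          apply mul_le_mul_of_nonneg_left hsC (by positivity)
      _ ≤ κ ^ Q * (L ^ r * C) := by
          apply mul_le_mul_of_nonneg_right _ hLC
          apply pow_le_pow_of_le_one (le_of_lt hκ0) (le_of_lt hκ1)
          have hmr : (Q + 1) * r ≤ m := le_trans hj2 hmj
          have : Q + 1 ≤ m / r := (Nat.le_div_iff_mul_le hr).mpr hmr
          omega
      _ < ε/2 := hQ'
  have hm1 : N + 1 ≤ m := le_trans hj1 hmj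
  have bound2 : ‖backIter G y x t m 0 - lam t‖ < ε/2 := by
    have := hN (m - 1) (by omega)
    rw [dist_eq_norm] at this
    have hmm : m - 1 + 1 = m := by omega
    rwa [hmm] at this
  have : ε < ε := by
    calc ε = ‖(lamBar t - backIter G y x t m 0) + (backIter G y x t m 0 - lam t)‖ := by
          rw [hε]; congr 1; abel
      _ ≤ ‖lamBar t - backIter G y x t m 0‖ + ‖backIter G y x t m 0 - lam t‖ := norm_add_le _ _
      _ < ε/2 + ε/2 := add_lt_add bound1 bound2
      _ = ε := by ring
  exact lt_irrefl _ this
end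

section
/- Under the same hypotheses on (G_{y,x}), for any x (with summable weighted norm) and any two sequences y, y' ∈ E^ℤ agreeing at coordinates −m+1, …, 0 (i.e. y_i = y'_i for −m+1 ≤ i ≤ 0), the limits satisfy |λ₀^{(y,x)} − λ₀^{(y',x)}| ≤ L^r κ^{m/r − 1} · L̃/(1−κ), where L̃ = Σ_{i=1}^r L^i. In particular the dependence of λ₀ on remote past values of y decays geometrically in m, uniformly in x. -/
open Classical

/-- Geometric decay of the dependence of `λ₀` on remote past values of `y`:
if `y` and `y'` agree at coordinates `-m+1, …, 0` then
`‖λ₀^{(y,x)} - λ₀^{(y',x)}‖ ≤ L^r κ^{m/r - 1} · L̃ / (1 - κ)` with `L̃ = Σ_{i=1}^r L^i`,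
uniformly in `x`. -/
theorem stmt13 {E V W : Type*} [NormedAddCommGroup V] [NormedAddCommGroup W]
    [CompleteSpace W]
    (G : E → V → W → W) (L : ℝ) (hL : 1 ≤ L)
    (hLip : ∀ (y y' : E) (x x' : V) (z z' : W),
      ‖G y x z - G y' x' z'‖ ≤
        L * ((if y = y' then (0 : ℝ) else 1) + ‖x - x'‖ + ‖z - z'‖))
    (r : ℕ) (hr : 0 < r) (κ : ℝ) (hκ : κ ∈ Set.Ioo (0 : ℝ) 1)
    (hcontract : ∀ (y : ℤ → E) (x : ℤ → V) (t : ℤ) (z z' : W),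
      ‖backIter G y x t r z - backIter G y x t r z'‖ ≤ κ * ‖z - z'‖)
    (y y' : ℤ → E) (x : ℤ → V)
    (hx : ∀ t : ℤ, Summable fun i : ℕ => κ ^ ((i : ℝ) / (r : ℝ)) * ‖x (t - i)‖)
    (m : ℕ) (hm : 1 ≤ m)
    (hagree : ∀ i : ℤ, -(m : ℤ) + 1 ≤ i → i ≤ 0 → y i = y' i)
    (lam0 lam0' : W)
    (hlam0 : Filter.Tendsto (fun n : ℕ => backIter G y x 0 (n + 1) 0)
      Filter.atTop (nhds lam0))
    (hlam0' : Filter.Tendsto (fun n : ℕ => backIter G y' x 0 (n + 1) 0)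
      Filter.atTop (nhds lam0')) :
    ‖lam0 - lam0'‖ ≤
      L ^ r * κ ^ ((m : ℝ) / (r : ℝ) - 1) *
        ((∑ i ∈ Finset.range r, L ^ (i + 1)) / (1 - κ)) := by
  obtain ⟨hκ0, hκ1⟩ := hκ
  have hL0 : (0:ℝ) ≤ L := le_trans zero_le_one hL
  set Ltil : ℝ := ∑ i ∈ Finset.range r, L ^ (i + 1) with hLtil
  have hLtil0 : 0 ≤ Ltil := Finset.sum_nonneg fun i _ => pow_nonneg hL0 _
  have h1κ : 0 < 1 - κ := by linarith
  -- one step Lipschitz in z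
  have step : ∀ (a : E) (b : V) (z z' : W), ‖G a b z - G a b z'‖ ≤ L * ‖z - z'‖ := by
    intro a b z z'
    have := hLip a a b b z z'
    simpa using this
  -- composition of backward iterates
  have hadd : ∀ (yy : ℤ → E) (a b : ℕ) (t : ℤ) (z : W),
      backIter G yy x t (a + b) z = backIter G yy x t a (backIter G yy x (t - a) b z) := by
    intro yy a
    induction a with
    | zero => intro b t z; simp [backIter]
    | succ a ih =>
        intro b t z
        have h : a + 1 + b = (a + b) + 1 := by omega
        rw [h]
        simp only [backIter]
        rw [ih]
        congr 2
        push_cast; ring_nf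
  -- backIter only depends on y on the window [t-n, t-1]
  have hcongr : ∀ (n : ℕ) (t : ℤ),
      (∀ i : ℤ, t - n ≤ i → i ≤ t - 1 → y i = y' i) →
      ∀ z : W, backIter G y x t n z = backIter G y' x t n z := by
    intro n
    induction n with
    | zero => intro t _ z; simp [backIter]
    | succ n ih =>
        intro t h z
        simp only [backIter]
        rw [h (t - 1) (by push_cast; omega) (by omega),
          ih (t - 1) (fun i h1 h2 => h i (by push_cast at h1 ⊢; omega) (by omega)) z]
  -- plain Lipschitz bound
  have lipPlain : ∀ (yy : ℤ → E) (n : ℕ) (t : ℤ) (z z' : W),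
      ‖backIter G yy x t n z - backIter G yy x t n z'‖ ≤ L ^ n * ‖z - z'‖ := by
    intro yy n
    induction n with
    | zero => intro t z z'; simp [backIter]
    | succ n ih =>
        intro t z z'
        simp only [backIter]
        calc ‖G (yy (t-1)) (x t) (backIter G yy x (t-1) n z) -
              G (yy (t-1)) (x t) (backIter G yy x (t-1) n z')‖
            ≤ L * ‖backIter G yy x (t-1) n z - backIter G yy x (t-1) n z'‖ := step _ _ _ _
          _ ≤ L * (L ^ n * ‖z - z'‖) := by
              exact mul_le_mul_of_nonneg_left (ih _ _ _) hL0
          _ = L ^ (n+1) * ‖z - z'‖ := by ring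
  -- refined Lipschitz bound
  have lipRef : ∀ (yy : ℤ → E) (n : ℕ) (t : ℤ) (z z' : W),
      ‖backIter G yy x t n z - backIter G yy x t n z'‖ ≤
        L ^ (n % r) * κ ^ (n / r) * ‖z - z'‖ := by
    intro yy n
    induction n using Nat.strong_induction_on with
    | _ n ih =>
      intro t z z'
      by_cases hn : n < r
      · rw [Nat.mod_eq_of_lt hn, Nat.div_eq_of_lt hn]
        simpa using lipPlain yy n t z z'
      · push_neg at hn
        have hsplit : n = (n - r) + r := by omega
        rw [hsplit, hadd, hadd]
        have hinner : ‖backIter G yy x (t - (↑(n - r))) r z -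
            backIter G yy x (t - (↑(n - r))) r z'‖ ≤ κ * ‖z - z'‖ :=
          hcontract yy x _ z z'
        calc ‖backIter G yy x t (n - r) (backIter G yy x (t - ↑(n - r)) r z) -
              backIter G yy x t (n - r) (backIter G yy x (t - ↑(n - r)) r z')‖
            ≤ L ^ ((n - r) % r) * κ ^ ((n - r) / r) *
              ‖backIter G yy x (t - ↑(n - r)) r z -
                backIter G yy x (t - ↑(n - r)) r z'‖ :=
              ih (n - r) (by omega) _ _ _
          _ ≤ L ^ ((n - r) % r) * κ ^ ((n - r) / r) * (κ * ‖z - z'‖) := by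
              refine mul_le_mul_of_nonneg_left hinner (by positivity)
          _ = L ^ ((n - r) % r) * κ ^ ((n - r) / r + 1) * ‖z - z'‖ := by ring
          _ = L ^ (((n-r)+r) % r) * κ ^ (((n-r)+r) / r) * ‖z - z'‖ := by
              rw [Nat.add_mod_right, Nat.add_div_right _ hr]
  -- difference in y, short bound
  have diffShort : ∀ (n : ℕ) (t : ℤ) (z : W),
      ‖backIter G y x t n z - backIter G y' x t n z‖ ≤
        ∑ i ∈ Finset.range n, L ^ (i + 1) := by
    intro n
    induction n with
    | zero => intro t z; simp [backIter]
    | succ n ih =>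
        intro t z
        simp only [backIter]
        have h1 := hLip (y (t-1)) (y' (t-1)) (x t) (x t)
          (backIter G y x (t-1) n z) (backIter G y' x (t-1) n z)
        have hite : (if y (t-1) = y' (t-1) then (0:ℝ) else 1) ≤ 1 := by
          split <;> norm_num
        calc ‖G (y (t-1)) (x t) (backIter G y x (t-1) n z) -
              G (y' (t-1)) (x t) (backIter G y' x (t-1) n z)‖
            ≤ L * ((if y (t-1) = y' (t-1) then (0:ℝ) else 1) + ‖x t - x t‖ +
              ‖backIter G y x (t-1) n z - backIter G y' x (t-1) n z‖) := h1
          _ ≤ L * (1 + 0 + ∑ i ∈ Finset.range n, L ^ (i + 1)) := by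
              refine mul_le_mul_of_nonneg_left ?_ hL0
              gcongr
              · simp
              · exact ih _ _
          _ = ∑ i ∈ Finset.range (n+1), L ^ (i + 1) := by
              rw [Finset.sum_range_succ' (fun i => L ^ (i+1)) n, add_zero, mul_add,
                mul_one, Finset.mul_sum]
              simp only [← pow_succ']
              ring
  have diffShortR : ∀ (n : ℕ), n ≤ r → ∀ (t : ℤ) (z : W),
      ‖backIter G y x t n z - backIter G y' x t n z‖ ≤ Ltil := by
    intro n hn t z
    refine le_trans (diffShort n t z) ?_
    exact Finset.sum_le_sum_of_subset_of_nonneg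
      (Finset.range_subset_range.2 hn) (fun i _ _ => pow_nonneg hL0 _)
  -- global difference bound
  have diffGlob : ∀ (n : ℕ) (t : ℤ) (z : W),
      ‖backIter G y x t n z - backIter G y' x t n z‖ ≤ Ltil / (1 - κ) := by
    intro n
    induction n using Nat.strong_induction_on with
    | _ n ih =>
      intro t z
      by_cases hn : n < r
      · refine le_trans (diffShortR n hn.le t z) ?_
        rw [le_div_iff₀ h1κ]
        nlinarith
      · push_neg at hn
        have hsplit : n = r + (n - r) := by omega
        rw [hsplit, hadd, hadd]
        set u := backIter G y x (t - (r:ℕ)) (n - r) z with hu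
        set u' := backIter G y' x (t - (r:ℕ)) (n - r) z with hu'
        calc ‖backIter G y x t r u - backIter G y' x t r u'‖
            ≤ ‖backIter G y x t r u - backIter G y x t r u'‖ +
              ‖backIter G y x t r u' - backIter G y' x t r u'‖ := by
              exact norm_sub_le_norm_sub_add_norm_sub _ _ _
          _ ≤ κ * ‖u - u'‖ + Ltil := by
              gcongr
              · exact hcontract y x t u u'
              · exact diffShortR r le_rfl t u'
          _ ≤ κ * (Ltil / (1 - κ)) + Ltil := by
              gcongr
              exact ih (n - r) (by omega) _ _
          _ = Ltil / (1 - κ) := by field_simp; ring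
  -- key finite-level bound
  set s : ℕ := (m - 1) % r with hs
  set q : ℕ := (m - 1) / r with hq
  have key : ∀ n : ℕ, m - 1 ≤ n →
      ‖backIter G y x 0 n 0 - backIter G y' x 0 n 0‖ ≤
        L ^ s * κ ^ q * (Ltil / (1 - κ)) := by
    intro n hn
    have hsplit : n = (m - 1) + (n - (m - 1)) := by omega
    rw [hsplit, hadd, hadd]
    have h1 : backIter G y' x 0 (m-1) (backIter G y' x (0 - ((m-1:ℕ):ℤ)) (n-(m-1)) 0)
        = backIter G y x 0 (m-1) (backIter G y' x (0 - ((m-1:ℕ):ℤ)) (n-(m-1)) 0) := by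
      refine (hcongr (m-1) 0 ?_ _).symm
      intro i hi1 hi2
      exact hagree i (by omega) (by omega)
    rw [h1]
    calc ‖backIter G y x 0 (m-1) (backIter G y x (0 - ((m-1:ℕ):ℤ)) (n - (m-1)) 0) -
          backIter G y x 0 (m-1) (backIter G y' x (0 - ((m-1:ℕ):ℤ)) (n - (m-1)) 0)‖
        ≤ L ^ s * κ ^ q *
          ‖backIter G y x (0 - ((m-1:ℕ):ℤ)) (n - (m-1)) 0 -
            backIter G y' x (0 - ((m-1:ℕ):ℤ)) (n - (m-1)) 0‖ := lipRef y (m-1) 0 _ _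
      _ ≤ L ^ s * κ ^ q * (Ltil / (1 - κ)) := by
          refine mul_le_mul_of_nonneg_left (diffGlob _ _ _) (by positivity)
  -- pass to the limit
  have hCnn : ‖lam0 - lam0'‖ ≤ L ^ s * κ ^ q * (Ltil / (1 - κ)) := by
    have htend : Filter.Tendsto
        (fun n : ℕ => ‖backIter G y x 0 (n+1) 0 - backIter G y' x 0 (n+1) 0‖)
        Filter.atTop (nhds ‖lam0 - lam0'‖) := (hlam0.sub hlam0').norm
    refine le_of_tendsto htend ?_
    filter_upwards [Filter.eventually_ge_atTop m] with n hn
    exact key (n+1) (by omega)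
  refine le_trans hCnn ?_
  -- numeric comparison
  have hrR : (0:ℝ) < (r:ℝ) := by exact_mod_cast hr
  have hsr : s < r := Nat.mod_lt _ hr
  have hdm : r * q + s = m - 1 := Nat.div_add_mod (m-1) r
  have hmR : (m:ℝ) = r * q + s + 1 := by
    have := congrArg (fun k : ℕ => (k:ℝ)) hdm
    push_cast [Nat.cast_sub hm] at this
    linarith
  have hexp : (m:ℝ) / (r:ℝ) - 1 ≤ (q:ℕ) := by
    rw [sub_le_iff_le_add, div_le_iff₀ hrR]
    have hsR : (s:ℝ) + 1 ≤ (r:ℝ) := by exact_mod_cast hsr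
    nlinarith
  have hκq : (κ : ℝ) ^ q ≤ κ ^ ((m:ℝ)/(r:ℝ) - 1) := by
    rw [← Real.rpow_natCast κ q]
    exact Real.rpow_le_rpow_of_exponent_ge hκ0 hκ1.le hexp
  have hLs : L ^ s ≤ L ^ r := pow_le_pow_right₀ hL hsr.le
  have hD : (0:ℝ) ≤ Ltil / (1 - κ) := div_nonneg hLtil0 h1κ.le
  calc L ^ s * κ ^ q * (Ltil / (1 - κ))
      ≤ L ^ r * κ ^ ((m:ℝ)/(r:ℝ) - 1) * (Ltil / (1 - κ)) := by
        refine mul_le_mul_of_nonneg_right ?_ hD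
        exact mul_le_mul hLs hκq (by positivity) (by positivity)
    _ = _ := rfl
end

section
/- Perturbation bound for finite Markov chains via the Dobrushin coefficient: let q and q̄ be stochastic matrices on a finite set E with Dobrushin contraction coefficient b₀ = sup_{y,y'} d_TV(q(·|y), q(·|y')) < 1 for q (and analogously for q̄), each with unique stationary distributions π and π̄. Then d_TV(π, π̄) ≤ (1 − b₀)^{−1} · sup_{y∈E} d_TV(q(·|y), q̄(·|y)). -/
open Finset

/-- Dobrushin contraction: a zero-sum vector contracts under a stochastic
matrix with Dobrushin coefficient at most `b₀`. -/
lemma dobrushin_contract {E : Type*} [Fintype E] (q : E → E → ℝ) (b₀ : ℝ)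
    (hDob : ∀ y y', (1 / 2) * ∑ z, |q y z - q y' z| ≤ b₀)
    (μ : E → ℝ) (hμ : ∑ y, μ y = 0) :
    ∑ z, |∑ y, μ y * q y z| ≤ b₀ * ∑ y, |μ y| := by
  set p : E → ℝ := fun y => max (μ y) 0 with hp_def
  set n : E → ℝ := fun y => max (-μ y) 0 with hn_def
  have hpn : ∀ y, μ y = p y - n y := by
    intro y; simp [hp_def, hn_def, max_def]; split_ifs <;> linarith
  have habs : ∀ y, |μ y| = p y + n y := by
    intro y; rcases le_total (μ y) 0 with h | h
    · simp [hp_def, hn_def, abs_of_nonpos h, max_eq_right h, max_eq_left (by linarith : (0:ℝ) ≤ -μ y)]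
    · simp [hp_def, hn_def, abs_of_nonneg h, max_eq_left h, max_eq_right (by linarith : -μ y ≤ 0)]
  have hp0 : ∀ y, 0 ≤ p y := fun y => le_max_right _ _
  have hn0 : ∀ y, 0 ≤ n y := fun y => le_max_right _ _
  set m : ℝ := ∑ y, p y with hm_def
  have hsum_n : ∑ y, n y = m := by
    have : ∑ y, (p y - n y) = 0 := by
      rw [← hμ]; exact Finset.sum_congr rfl fun y _ => (hpn y).symm
    rw [Finset.sum_sub_distrib] at this
    linarith
  have hsum_abs : ∑ y, |μ y| = 2 * m := by
    calc ∑ y, |μ y| = ∑ y, (p y + n y) := Finset.sum_congr rfl fun y _ => habs y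
    _ = m + m := by rw [Finset.sum_add_distrib, hsum_n]
    _ = 2 * m := by ring
  have hm0 : 0 ≤ m := Finset.sum_nonneg fun y _ => hp0 y
  rcases eq_or_lt_of_le hm0 with hm | hm
  · -- m = 0 : μ = 0
    have hp_zero : ∀ y ∈ Finset.univ, p y = 0 :=
      (Finset.sum_eq_zero_iff_of_nonneg fun y _ => hp0 y).mp hm.symm
    have hn_zero : ∀ y ∈ Finset.univ, n y = 0 := by
      apply (Finset.sum_eq_zero_iff_of_nonneg fun y _ => hn0 y).mp
      rw [hsum_n]; exact hm.symm
    have hμ0 : ∀ y, μ y = 0 := fun y => by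
      rw [hpn y, hp_zero y (Finset.mem_univ y), hn_zero y (Finset.mem_univ y)]; ring
    simp [hμ0]
  · -- m > 0
    have key : ∀ z, m * (∑ y, μ y * q y z)
        = ∑ y, ∑ y', p y * n y' * (q y z - q y' z) := by
      intro z
      have inner : ∀ y, ∑ y', p y * n y' * (q y z - q y' z)
          = p y * q y z * m - p y * (∑ y', n y' * q y' z) := by
        intro y
        rw [← hsum_n, Finset.mul_sum, Finset.mul_sum, ← Finset.sum_sub_distrib]
        exact Finset.sum_congr rfl fun y' _ => by ring
      calc m * (∑ y, μ y * q y z)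
          = (∑ y, p y * q y z) * m - m * (∑ y', n y' * q y' z) := by
            have e : ∑ y, μ y * q y z = (∑ y, p y * q y z) - ∑ y, n y * q y z := by
              rw [← Finset.sum_sub_distrib]
              exact Finset.sum_congr rfl fun y _ => by rw [hpn y]; ring
            rw [e]; ring
        _ = ∑ y, (p y * q y z * m - p y * (∑ y', n y' * q y' z)) := by
            rw [Finset.sum_sub_distrib, ← Finset.sum_mul, ← Finset.sum_mul, ← hm_def]
        _ = ∑ y, ∑ y', p y * n y' * (q y z - q y' z) :=
            (Finset.sum_congr rfl fun y _ => (inner y).symm)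
    have bound : m * ∑ z, |∑ y, μ y * q y z| ≤ 2 * b₀ * m * m := by
      calc m * ∑ z, |∑ y, μ y * q y z|
          = ∑ z, |m * ∑ y, μ y * q y z| := by
            rw [Finset.mul_sum]
            exact Finset.sum_congr rfl fun z _ => by
              rw [abs_mul, abs_of_nonneg hm0]
        _ = ∑ z, |∑ y, ∑ y', p y * n y' * (q y z - q y' z)| := by
            exact Finset.sum_congr rfl fun z _ => by rw [key z]
        _ ≤ ∑ z, ∑ y, ∑ y', |p y * n y' * (q y z - q y' z)| := by
            apply Finset.sum_le_sum
            intro z _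
            exact (Finset.abs_sum_le_sum_abs _ _).trans
              (Finset.sum_le_sum fun y _ => Finset.abs_sum_le_sum_abs _ _)
        _ = ∑ y, ∑ y', p y * n y' * ∑ z, |q y z - q y' z| := by
            rw [Finset.sum_comm]
            apply Finset.sum_congr rfl; intro y _
            rw [Finset.sum_comm]
            apply Finset.sum_congr rfl; intro y' _
            rw [Finset.mul_sum]
            exact Finset.sum_congr rfl fun z _ => by
              rw [abs_mul, abs_of_nonneg (mul_nonneg (hp0 y) (hn0 y'))]
        _ ≤ ∑ y, ∑ y', p y * n y' * (2 * b₀) := by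
            apply Finset.sum_le_sum; intro y _
            apply Finset.sum_le_sum; intro y' _
            exact mul_le_mul_of_nonneg_left (by linarith [hDob y y'])
              (mul_nonneg (hp0 y) (hn0 y'))
        _ = 2 * b₀ * m * m := by
            simp only [← Finset.sum_mul, ← Finset.mul_sum]
            rw [hsum_n, ← hm_def]
            ring
    have := (mul_le_mul_iff_right₀ hm).mp (by linarith : m * ∑ z, |∑ y, μ y * q y z| ≤ m * (2 * b₀ * m))
    rw [hsum_abs]
    linarith

/-- Perturbation bound for finite Markov chains via the Dobrushin ergodicity
coefficient: if `b₀ < 1` bounds the Dobrushin coefficient of `q`, and `π, π̄` are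
stationary distributions of the stochastic matrices `q, q̄`, then
`d_TV(π, π̄) ≤ (1 - b₀)⁻¹ · sup_y d_TV(q(·|y), q̄(·|y))`. -/
theorem stmt17 {E : Type*} [Fintype E] [Nonempty E]
    (q qbar : E → E → ℝ)
    (hq0 : ∀ y z, 0 ≤ q y z) (hq1 : ∀ y, ∑ z, q y z = 1)
    (hqbar0 : ∀ y z, 0 ≤ qbar y z) (hqbar1 : ∀ y, ∑ z, qbar y z = 1)
    (b₀ : ℝ) (hb₀ : b₀ < 1)
    (hDob : ∀ y y', (1 / 2) * ∑ z, |q y z - q y' z| ≤ b₀)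
    (π πbar : E → ℝ)
    (hπ0 : ∀ z, 0 ≤ π z) (hπ1 : ∑ z, π z = 1)
    (hπbar0 : ∀ z, 0 ≤ πbar z) (hπbar1 : ∑ z, πbar z = 1)
    (hπstat : ∀ z, ∑ y, π y * q y z = π z)
    (hπbarstat : ∀ z, ∑ y, πbar y * qbar y z = πbar z)
    (δ : ℝ) (hδ : ∀ y, (1 / 2) * ∑ z, |q y z - qbar y z| ≤ δ) :
    (1 / 2) * ∑ z, |π z - πbar z| ≤ (1 - b₀)⁻¹ * δ := by
  set μ : E → ℝ := fun y => π y - πbar y with hμ_def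
  have hμsum : ∑ y, μ y = 0 := by
    simp only [hμ_def, Finset.sum_sub_distrib, hπ1, hπbar1]; ring
  set D : ℝ := ∑ z, |μ z| with hD_def
  have hcontract := dobrushin_contract q b₀ hDob μ hμsum
  -- decomposition bound
  have hdecomp : ∀ z, |π z - πbar z| ≤ |∑ y, μ y * q y z|
      + ∑ y, πbar y * |q y z - qbar y z| := by
    intro z
    have heq : π z - πbar z = (∑ y, μ y * q y z) + ∑ y, πbar y * (q y z - qbar y z) := by
      rw [← hπstat z, ← hπbarstat z]
      rw [Finset.sum_add_distrib.symm, ← Finset.sum_sub_distrib]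
      exact Finset.sum_congr rfl fun y _ => by simp [hμ_def]; ring
    rw [heq]
    refine (abs_add_le _ _).trans (add_le_add_right ?_ _)
    refine (Finset.abs_sum_le_sum_abs _ _).trans ?_
    exact Finset.sum_le_sum fun y _ => by
      rw [abs_mul, abs_of_nonneg (hπbar0 y)]
  have hD_bound : D ≤ b₀ * D + 2 * δ := by
    have h1 : D ≤ (∑ z, |∑ y, μ y * q y z|) + ∑ z, ∑ y, πbar y * |q y z - qbar y z| := by
      rw [hD_def, ← Finset.sum_add_distrib]
      exact Finset.sum_le_sum fun z _ => hdecomp z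
    have h2 : ∑ z, ∑ y, πbar y * |q y z - qbar y z| ≤ 2 * δ := by
      rw [Finset.sum_comm]
      calc ∑ y, ∑ z, πbar y * |q y z - qbar y z|
          = ∑ y, πbar y * ∑ z, |q y z - qbar y z| := by
            exact Finset.sum_congr rfl fun y _ => (Finset.mul_sum _ _ _).symm
        _ ≤ ∑ y, πbar y * (2 * δ) :=
            Finset.sum_le_sum fun y _ =>
              mul_le_mul_of_nonneg_left (by linarith [hδ y]) (hπbar0 y)
        _ = 2 * δ := by rw [← Finset.sum_mul, hπbar1, one_mul]
    calc D ≤ (∑ z, |∑ y, μ y * q y z|) + ∑ z, ∑ y, πbar y * |q y z - qbar y z| := h1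
      _ ≤ b₀ * D + 2 * δ := add_le_add hcontract h2
  have h1b : (0:ℝ) < 1 - b₀ := by linarith
  have hinv : (1 - b₀) * (1 - b₀)⁻¹ = 1 := mul_inv_cancel₀ (ne_of_gt h1b)
  have hinv0 : 0 ≤ (1 - b₀)⁻¹ := le_of_lt (inv_pos.mpr h1b)
  -- (1 - b₀) * D ≤ 2δ
  have hDfinal : (1 - b₀) * D ≤ 2 * δ := by linarith
  have : D ≤ (1 - b₀)⁻¹ * (2 * δ) := by
    have := mul_le_mul_of_nonneg_left hDfinal hinv0
    calc D = (1 - b₀)⁻¹ * ((1 - b₀) * D) := by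
          rw [← mul_assoc, mul_comm ((1-b₀)⁻¹), hinv, one_mul]
      _ ≤ (1 - b₀)⁻¹ * (2 * δ) := this
  have hgoal : (1 / 2) * ∑ z, |π z - πbar z| = (1/2) * D := by
    rw [hD_def]
  rw [hgoal]
  linarith
end
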